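/- Let κ ≥ 1/2 and π ∈ ℝ^{N−1} be such that the pair (s, w) given by s := λ₁ − κ⁻¹ xᵀr and w := κx + Xπ solves the system (∗). Then for every solution (s̃, w̃) of (∗) with (s̃, w̃) ≠ (s, w), either s > s̃ or xᵀw̃ < 0. -/

import Mathlib

open Matrix


set_option maxHeartbeats 4000000 in
lemma aux_key (M : ℕ) (lam1 lh s s' κ α ρ r0 : ℝ) (lam2v rrv cv cv' : Fin M → ℝ)
    (hlh : 0 < lh)
    (hlam : ∀ j, lam2v j ≤ lam1 - lh)
    (hκ : 1 / 2 ≤ κ) (hα0 : 0 ≤ α)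
    (hρ1 : -(1 / 2) ≤ ρ) (hρ2 : ρ ≤ 1 / 2)
    (hrb : r0 ^ 2 + ∑ j, rrv j ^ 2 ≤ lh ^ 2 / 64)
    (hrw0 : (lam1 - s) * κ = r0)
    (hrw'0 : (lam1 - s') * α = r0)
    (hrwj : ∀ j, (lam2v j - s) * cv j = rrv j)
    (hrw'j : ∀ j, (lam2v j - s') * cv' j = rrv j)
    (hnorm : κ ^ 2 + ∑ j, cv j ^ 2 = 1 + ρ)
    (hnorm' : α ^ 2 + ∑ j, cv' j ^ 2 = 1 + ρ)
    (hss' : s ≤ s') :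
    s' = s ∧ α = κ ∧ ∀ j, cv' j = cv j := by
  have hκpos : 0 < κ := by linarith
  have hsumrr : (0:ℝ) ≤ ∑ j, rrv j ^ 2 := Finset.sum_nonneg fun j _ => sq_nonneg _
  have hr0sq : r0 ^ 2 ≤ lh ^ 2 / 64 := by linarith
  have hSrr : ∑ j, rrv j ^ 2 ≤ lh ^ 2 / 64 := by nlinarith [sq_nonneg r0]
  have ha2 : (lam1 - s) ^ 2 ≤ lh ^ 2 / 16 := by
    have hk2 : (1:ℝ) / 4 ≤ κ ^ 2 := by nlinarith
    have he : (lam1 - s) ^ 2 * κ ^ 2 = r0 ^ 2 := by rw [← hrw0]; ring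
    nlinarith [sq_nonneg (lam1 - s)]
  have ha : lam1 - s ≤ lh / 4 := by nlinarith
  have hB : ∀ σ : ℝ, s ≤ σ → ∀ j, 3 * lh / 4 ≤ σ - lam2v j := by
    intro σ hσ j
    have := hlam j
    linarith
  have hsum36 : ∀ (σ : ℝ) (dv : Fin M → ℝ), s ≤ σ →
      (∀ j, (lam2v j - σ) * dv j = rrv j) → ∑ j, dv j ^ 2 ≤ 1 / 36 := by
    intro σ dv hσ hdv
    have perj : ∀ j, dv j ^ 2 * (3 * lh / 4) ^ 2 ≤ rrv j ^ 2 := by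
      intro j
      have hd := hB σ hσ j
      have h2 : ((lam2v j - σ) * dv j) ^ 2 = rrv j ^ 2 := by rw [hdv j]
      have h3 : 0 ≤ (σ - lam2v j - 3 * lh / 4) * (σ - lam2v j + 3 * lh / 4) * dv j ^ 2 := by
        have hb1 : (0:ℝ) ≤ σ - lam2v j - 3 * lh / 4 := by linarith
        have hb2 : (0:ℝ) ≤ σ - lam2v j + 3 * lh / 4 := by linarith
        positivity
      have h4 : rrv j ^ 2 - dv j ^ 2 * (3 * lh / 4) ^ 2 =
          (σ - lam2v j - 3 * lh / 4) * (σ - lam2v j + 3 * lh / 4) * dv j ^ 2 := by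
        linear_combination -h2
      linarith
    have hsumB : (∑ j, dv j ^ 2) * (3 * lh / 4) ^ 2 ≤ lh ^ 2 / 64 := by
      rw [Finset.sum_mul]
      exact le_trans (Finset.sum_le_sum fun j _ => perj j) hSrr
    nlinarith [hsumB, mul_pos hlh hlh,
      Finset.sum_nonneg (fun j (_ : j ∈ Finset.univ) => sq_nonneg (dv j))]
  have hSc' : ∑ j, cv' j ^ 2 ≤ 1 / 36 := hsum36 s' cv' hss' hrw'j
  have hSc : ∑ j, cv j ^ 2 ≤ 1 / 36 := hsum36 s cv le_rfl hrwj
  have hα12 : 1 / 2 ≤ α := by nlinarith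
  have hAA' : ∀ j, cv' j ^ 2 ≤ cv j ^ 2 := by
    intro j
    have hA : cv j ^ 2 * (s - lam2v j) ^ 2 = rrv j ^ 2 := by rw [← hrwj j]; ring
    have hA' : cv' j ^ 2 * (s' - lam2v j) ^ 2 = rrv j ^ 2 := by rw [← hrw'j j]; ring
    have hd := hB s le_rfl j
    have hd' := hB s' hss' j
    have hdd : (s - lam2v j) ^ 2 ≤ (s' - lam2v j) ^ 2 := by nlinarith
    have h1 : cv' j ^ 2 * (s - lam2v j) ^ 2 ≤ cv j ^ 2 * (s - lam2v j) ^ 2 := by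
      have h2 := mul_le_mul_of_nonneg_left hdd (sq_nonneg (cv' j))
      linarith
    have hdpos : (0:ℝ) < (s - lam2v j) ^ 2 := by
      have : (0:ℝ) < s - lam2v j := by linarith
      positivity
    exact le_of_mul_le_mul_right h1 hdpos
  have hsq : κ ^ 2 ≤ α ^ 2 := by
    have h := Finset.sum_le_sum fun j (_ : j ∈ Finset.univ) => hAA' j
    linarith
  have hακ : κ ≤ α := by nlinarith
  have hseq : s' = s := by
    by_contra hneq
    have hlt : s < s' := lt_of_le_of_ne hss' (Ne.symm hneq)
    have hperj : ∀ j, (cv j ^ 2 - cv' j ^ 2) * (3 * lh / 4) ≤ 2 * (s' - s) * cv j ^ 2 := by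
      intro j
      have hA : cv j ^ 2 * (s - lam2v j) ^ 2 = rrv j ^ 2 := by rw [← hrwj j]; ring
      have hA' : cv' j ^ 2 * (s' - lam2v j) ^ 2 = rrv j ^ 2 := by rw [← hrw'j j]; ring
      have hd := hB s le_rfl j
      have hd' := hB s' hss' j
      have hd'pos : (0:ℝ) < s' - lam2v j := by linarith
      have step2 : (cv j ^ 2 - cv' j ^ 2) * (s' - lam2v j) ^ 2 =
          cv j ^ 2 * ((s' - lam2v j) ^ 2 - (s - lam2v j) ^ 2) := by
        linear_combination hA - hA'
      have step3 : (cv j ^ 2 - cv' j ^ 2) * (s' - lam2v j) ^ 2 ≤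
          2 * (s' - s) * cv j ^ 2 * (s' - lam2v j) := by
        have h7 : 2 * (s' - s) * cv j ^ 2 * (s' - lam2v j) -
            (cv j ^ 2 - cv' j ^ 2) * (s' - lam2v j) ^ 2 = cv j ^ 2 * (s' - s) ^ 2 := by
          linear_combination -step2
        have h8 := mul_nonneg (sq_nonneg (cv j)) (sq_nonneg (s' - s))
        linarith
      have step4 : (cv j ^ 2 - cv' j ^ 2) * (s' - lam2v j) ≤ 2 * (s' - s) * cv j ^ 2 := by
        nlinarith [step3, hd'pos, hAA' j]
      have hnn : 0 ≤ cv j ^ 2 - cv' j ^ 2 := by linarith [hAA' j]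
      exact le_trans (mul_le_mul_of_nonneg_left hd' hnn) step4
    have hup : (α ^ 2 - κ ^ 2) * (3 * lh / 4) ≤ (s' - s) / 18 := by
      have hsum1 := Finset.sum_le_sum fun j (_ : j ∈ Finset.univ) => hperj j
      have e1 : ∑ j, (cv j ^ 2 - cv' j ^ 2) * (3 * lh / 4) =
          (α ^ 2 - κ ^ 2) * (3 * lh / 4) := by
        rw [← Finset.sum_mul, Finset.sum_sub_distrib]
        have h : ∑ j, cv j ^ 2 - ∑ j, cv' j ^ 2 = α ^ 2 - κ ^ 2 := by linarith
        rw [h]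
      have e2 : ∑ j, 2 * (s' - s) * cv j ^ 2 = 2 * (s' - s) * ∑ j, cv j ^ 2 := by
        rw [Finset.mul_sum]
      rw [e1, e2] at hsum1
      nlinarith [hsum1, hSc, hlt]
    rcases lt_trichotomy r0 0 with hr0 | hr0 | hr0
    · have hsneg : lam1 - s < 0 := by nlinarith [hrw0, hκpos]
      have hs'neg : lam1 - s' < 0 := by linarith
      have h1 : (lam1 - s') * α ≤ (lam1 - s') * κ := by nlinarith
      nlinarith [hrw'0, hrw0, h1, mul_pos (show (0:ℝ) < s' - s by linarith) hκpos]
    · have hseq1 : s = lam1 := by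
        have h : (lam1 - s) * κ = 0 := by rw [hrw0, hr0]
        rcases mul_eq_zero.mp h with h | h
        · linarith [sub_eq_zero.mp h]
        · linarith
      have hs'eq : s' = lam1 := by
        have h : (lam1 - s') * α = 0 := by rw [hrw'0, hr0]
        rcases mul_eq_zero.mp h with h | h
        · linarith [sub_eq_zero.mp h]
        · linarith
      exact hneq (hs'eq.trans hseq1.symm)
    · have ha'pos : 0 < lam1 - s' := by nlinarith [hrw'0, hα12]
      have h1 : α ^ 2 * (lam1 - s') ^ 2 = κ ^ 2 * (lam1 - s) ^ 2 := by
        linear_combination ((lam1 - s') * α + r0) * hrw'0 - ((lam1 - s) * κ + r0) * hrw0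
      have h4 : (α ^ 2 - κ ^ 2) * (lam1 - s') ^ 2 =
          2 * (s' - s) * κ ^ 2 * (lam1 - s') + κ ^ 2 * (s' - s) ^ 2 := by
        linear_combination h1
      have h5 : 2 * κ ^ 2 * (s' - s) ≤ (α ^ 2 - κ ^ 2) * (lam1 - s') := by
        nlinarith [h4, ha'pos, sq_nonneg (κ * (s' - s))]
      have hgap : 0 ≤ α ^ 2 - κ ^ 2 := by linarith
      have ha'le : lam1 - s' ≤ lh / 4 := by linarith
      have h6 : (α ^ 2 - κ ^ 2) * (lam1 - s') ≤ (α ^ 2 - κ ^ 2) * (lh / 4) :=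
        mul_le_mul_of_nonneg_left ha'le hgap
      have hκ2δ : (s' - s) / 2 ≤ 2 * κ ^ 2 * (s' - s) := by nlinarith
      nlinarith [hup, h5, h6, hκ2δ, hlt]
  refine ⟨hseq, ?_, ?_⟩
  · have hcc : ∀ j, cv' j = cv j := by
      intro j
      have hne0 : lam2v j - s ≠ 0 := by
        have := hB s le_rfl j
        intro h; rw [sub_eq_zero] at h; nlinarith
      have h1 : (lam2v j - s) * cv' j = (lam2v j - s) * cv j := by
        rw [hrwj j, ← hseq, hrw'j j]
      exact mul_left_cancel₀ hne0 h1
    have hSeq : ∑ j, cv' j ^ 2 = ∑ j, cv j ^ 2 :=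
      Finset.sum_congr rfl fun j _ => by rw [hcc j]
    have hα2 : α ^ 2 = κ ^ 2 := by linarith
    have h0 : (α - κ) * (α + κ) = 0 := by linear_combination hα2
    rcases mul_eq_zero.mp h0 with h | h
    · linarith [sub_eq_zero.mp h]
    · linarith
  · intro j
    have hne0 : lam2v j - s ≠ 0 := by
      have := hB s le_rfl j
      intro h; rw [sub_eq_zero] at h; nlinarith
    have h1 : (lam2v j - s) * cv' j = (lam2v j - s) * cv j := by
      rw [hrwj j, ← hseq, hrw'j j]
    exact mul_left_cancel₀ hne0 h1

set_option maxHeartbeats 1000000 in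
/-- Lemma 5.6 (ii) of Hakula–Laaksonen: the solution `(s, w)` constructed in part (i)
is dominant: any other solution `(s̃, w̃)` of the system satisfies `s̃ < s` or `xᵀw̃ < 0`. -/
theorem stmt1 (N : ℕ) (hN : 2 ≤ N)
    (S : Matrix (Fin N) (Fin N) ℝ)
    (x : Fin N → ℝ) (X : Matrix (Fin N) (Fin (N - 1)) ℝ)
    (lam1 : ℝ) (lam2 : Fin (N - 1) → ℝ)
    (hSx : S *ᵥ x = lam1 • x)
    (hSX : ∀ j, S *ᵥ (fun i => X i j) = lam2 j • (fun i => X i j))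
    (hxx : x ⬝ᵥ x = 1)
    (hxX : ∀ j, x ⬝ᵥ (fun i => X i j) = 0)
    (hXX : ∀ j k, (fun i => X i j) ⬝ᵥ (fun i => X i k) = if j = k then (1 : ℝ) else 0)
    (hord : Antitone lam2)
    (hsep : lam2 ⟨0, by omega⟩ < lam1)
    (ρ : ℝ) (r : Fin N → ℝ)
    (hρ : |ρ| ≤ 1 / 2)
    (hr : Real.sqrt (r ⬝ᵥ r) ≤ (lam1 - lam2 ⟨0, by omega⟩) / 8)
    (κ : ℝ) (π : Fin (N - 1) → ℝ) (hκ : 1 / 2 ≤ κ)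
    (s : ℝ) (hs : s = lam1 - κ⁻¹ * (x ⬝ᵥ r))
    (w : Fin N → ℝ) (hw : w = κ • x + X *ᵥ π)
    (hsolve1 : S *ᵥ w = s • w + r)
    (hsolve2 : w ⬝ᵥ w = 1 + ρ) :
    ∀ (s' : ℝ) (w' : Fin N → ℝ),
      S *ᵥ w' = s' • w' + r → w' ⬝ᵥ w' = 1 + ρ →
      ¬(s' = s ∧ w' = w) → s' < s ∨ x ⬝ᵥ w' < 0 := by
  obtain ⟨M, rfl⟩ : ∃ M, N = M + 1 := ⟨N - 1, by omega⟩
  intro s' w' hsolve1' hsolve2' hne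
  by_contra hcon
  push_neg at hcon
  obtain ⟨hss', hα0⟩ := hcon
  -- basic eigenvalue gap
  set i0 : Fin (M + 1 - 1) := ⟨0, by omega⟩ with hi0
  set lh : ℝ := lam1 - lam2 i0 with hlhdef
  have hlh : 0 < lh := sub_pos.mpr hsep
  -- the orthonormal eigenbasis
  set u : Fin (M + 1) → Fin (M + 1) → ℝ := Fin.cons x (fun j i => X i j) with hudef
  set lam : Fin (M + 1) → ℝ := Fin.cons lam1 lam2 with hlamdef
  have hu0 : u 0 = x := rfl
  have hus : ∀ j : Fin M, u j.succ = fun i => X i j := fun j => rfl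
  have hlam0 : lam 0 = lam1 := rfl
  have hlams : ∀ j : Fin M, lam j.succ = lam2 j := fun j => rfl
  have huu : ∀ a b, u a ⬝ᵥ u b = if a = b then (1 : ℝ) else 0 := by
    intro a b
    induction a using Fin.cases with
    | zero =>
      induction b using Fin.cases with
      | zero => simpa [hudef] using hxx
      | succ k => simpa [hudef, (Fin.succ_ne_zero k).symm] using hxX k
    | succ j =>
      induction b using Fin.cases with
      | zero =>
        rw [dotProduct_comm]
        simpa [hudef, Fin.succ_ne_zero j] using hxX j
      | succ k => simpa [hudef, Fin.succ_inj] using hXX j k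
  have hSu : ∀ a, S *ᵥ u a = lam a • u a := by
    intro a
    induction a using Fin.cases with
    | zero => simpa [hudef, hlamdef] using hSx
    | succ j => simpa [hudef, hlamdef] using hSX j
  set P : Matrix (Fin (M + 1)) (Fin (M + 1)) ℝ := Matrix.of (fun i a => u a i) with hPdef
  have hPtP : Pᵀ * P = 1 := by
    ext a b
    have h := huu a b
    simp only [dotProduct] at h
    simp [Matrix.mul_apply, Matrix.one_apply, hPdef, Matrix.transpose_apply, h]
  have hPPt : P * Pᵀ = 1 := mul_eq_one_comm.mp hPtP
  have hcoef : ∀ v : Fin (M + 1) → ℝ, Pᵀ *ᵥ v = fun a => u a ⬝ᵥ v := by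
    intro v; funext a
    simp [Matrix.mulVec, hPdef, dotProduct, Matrix.transpose_apply]
  have hcomp : ∀ v : Fin (M + 1) → ℝ, P *ᵥ (Pᵀ *ᵥ v) = v := by
    intro v; rw [Matrix.mulVec_mulVec, hPPt, Matrix.one_mulVec]
  have hpars : ∀ v : Fin (M + 1) → ℝ, v ⬝ᵥ v = ∑ a, (u a ⬝ᵥ v) ^ 2 := by
    intro v
    have h1 : v ⬝ᵥ v = (Pᵀ *ᵥ v) ⬝ᵥ (Pᵀ *ᵥ v) := by
      conv_lhs => rw [← hcomp v]
      rw [Matrix.dotProduct_mulVec, ← Matrix.mulVec_transpose, Matrix.mulVec_mulVec, hPtP,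
        Matrix.one_mulVec]
    rw [h1, hcoef v]
    simp [dotProduct, sq]
  have hrel : ∀ (σ : ℝ) (v : Fin (M + 1) → ℝ), S *ᵥ v = σ • v + r →
      ∀ a, (lam a - σ) * (u a ⬝ᵥ v) = u a ⬝ᵥ r := by
    intro σ v hv a
    have hSP : S * P = P * Matrix.diagonal lam := by
      ext i b
      have h := congrFun (hSu b) i
      simp only [Matrix.mulVec, dotProduct, Pi.smul_apply, smul_eq_mul] at h
      rw [Matrix.mul_diagonal, Matrix.mul_apply]
      simp only [hPdef, Matrix.of_apply]
      rw [h]; ring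
    have h2 : ∀ z, u a ⬝ᵥ (P *ᵥ z) = z a := by
      intro z
      have h3 := congrFun (hcoef (P *ᵥ z)) a
      rw [Matrix.mulVec_mulVec, hPtP, Matrix.one_mulVec] at h3
      exact h3.symm ▸ rfl
    have h1 : u a ⬝ᵥ (S *ᵥ v) = lam a * (u a ⬝ᵥ v) := by
      conv_lhs => rw [← hcomp v, Matrix.mulVec_mulVec, hSP, ← Matrix.mulVec_mulVec]
      rw [h2, Matrix.mulVec_diagonal, congrFun (hcoef v) a]
    have h3 : u a ⬝ᵥ (S *ᵥ v) = σ * (u a ⬝ᵥ v) + u a ⬝ᵥ r := by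
      rw [hv, dotProduct_add, dotProduct_smul, smul_eq_mul]
    linear_combination h3 - h1
  -- scalar data
  set r0 : ℝ := x ⬝ᵥ r with hr0def
  set rr : Fin M → ℝ := fun j => (fun i => X i j) ⬝ᵥ r with hrrdef
  set α : ℝ := x ⬝ᵥ w' with hαdef
  set c' : Fin M → ℝ := fun j => (fun i => X i j) ⬝ᵥ w' with hc'def
  set c : Fin M → ℝ := fun j => (fun i => X i j) ⬝ᵥ w with hcdef
  have hwκ : x ⬝ᵥ w = κ := by
    have hxXz : x ⬝ᵥ (X *ᵥ π) = 0 := by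
      rw [Matrix.dotProduct_mulVec]
      have hz : x ᵥ* X = 0 := by
        funext j
        simpa [Matrix.vecMul, dotProduct] using hxX j
      rw [hz, zero_dotProduct]
    rw [hw, dotProduct_add, dotProduct_smul, smul_eq_mul, hxx, hxXz]; ring
  have hrw'0 : (lam1 - s') * α = r0 := hrel s' w' hsolve1' 0
  have hrw'j : ∀ j : Fin M, (lam2 j - s') * c' j = rr j := fun j => hrel s' w' hsolve1' j.succ
  have hrw0 : (lam1 - s) * κ = r0 := by
    have h := hrel s w hsolve1 0
    rwa [hu0, hwκ] at h
  have hrwj : ∀ j : Fin M, (lam2 j - s) * c j = rr j := fun j => hrel s w hsolve1 j.succ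
  have hnorm' : α ^ 2 + ∑ j, c' j ^ 2 = 1 + ρ := by
    have h := (hpars w').symm.trans hsolve2'
    rwa [Fin.sum_univ_succ] at h
  have hnorm : κ ^ 2 + ∑ j, c j ^ 2 = 1 + ρ := by
    have h := (hpars w).symm.trans hsolve2
    rw [Fin.sum_univ_succ, hu0, hwκ] at h
    exact h
  have hrbound : r0 ^ 2 + ∑ j, rr j ^ 2 ≤ lh ^ 2 / 64 := by
    have hrpars : r ⬝ᵥ r = r0 ^ 2 + ∑ j, rr j ^ 2 := by
      have h := hpars r
      rwa [Fin.sum_univ_succ] at h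
    have h0 : (0 : ℝ) ≤ r ⬝ᵥ r := by rw [hrpars]; positivity
    have h1 : r ⬝ᵥ r ≤ (lh / 8) ^ 2 := by
      calc r ⬝ᵥ r = Real.sqrt (r ⬝ᵥ r) ^ 2 := (Real.sq_sqrt h0).symm
        _ ≤ (lh / 8) ^ 2 := by
            refine pow_le_pow_left₀ (Real.sqrt_nonneg _) ?_ 2
            exact hr
    have h2 : (lh / 8) ^ 2 = lh ^ 2 / 64 := by ring
    linarith [h1, hrpars, h2]
  have hlamle : ∀ j : Fin M, lam2 j ≤ lam1 - lh := by
    intro j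
    have h2 : lam2 j ≤ lam2 i0 := hord (by simp [hi0, Fin.le_def])
    have h3 : lam2 i0 = lam1 - lh := by rw [hlhdef]; ring
    linarith
  obtain ⟨hρ1, hρ2⟩ := abs_le.mp hρ
  obtain ⟨hseq, hαeq, hcc⟩ := aux_key M lam1 lh s s' κ α ρ r0 lam2 rr c c' hlh hlamle hκ hα0
    (by linarith) hρ2 hrbound hrw0 hrw'0 hrwj hrw'j hnorm hnorm' hss'
  have hweq : w' = w := by
    have hP : Pᵀ *ᵥ w' = Pᵀ *ᵥ w := by
      rw [hcoef w', hcoef w]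
      funext a
      induction a using Fin.cases with
      | zero => rw [hu0, hwκ]; exact hαeq
      | succ j => exact hcc j
    calc w' = P *ᵥ (Pᵀ *ᵥ w') := (hcomp w').symm
      _ = P *ᵥ (Pᵀ *ᵥ w) := by rw [hP]
      _ = w := hcomp w
  exact hne ⟨hseq, hweq⟩
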